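/- Let (Nᵢ)_{i=0}^n be a square-integrable martingale with N₀ = 0 relative to a filtration (𝒢ᵢ). Define W₀ = 0 and Wᵢ = Σ_{j=1}^i ( E[(N_j − N_{j−1})² | 𝒢_{j−1}] + (N_j − N_{j−1})² ). Then for every ξ > 0 and t ≥ 0, P( ∃ 1 ≤ i ≤ n : Nᵢ > (ξ/2)Wᵢ + t/ξ ) ≤ e^{−t}. -/

import Mathlib

open MeasureTheory

lemma freedman_aux_exp_le (u : ℝ) : Real.exp (u - u ^ 2 / 2) ≤ 1 + u + u ^ 2 / 2 := by
  set F : ℝ → ℝ := fun x => (1 + x + x ^ 2 / 2) * Real.exp (x ^ 2 / 2 - x) with hF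
  have hder : ∀ x : ℝ, HasDerivAt F (x / 2 * (2 + x + x ^ 2) * Real.exp (x ^ 2 / 2 - x)) x := by
    intro x
    have h1 : HasDerivAt (fun y : ℝ => 1 + y + y ^ 2 / 2) (1 + x) x := by
      have := ((hasDerivAt_const x (1:ℝ)).add (hasDerivAt_id x)).add
        ((hasDerivAt_pow 2 x).div_const 2)
      exact this.congr_deriv (by push_cast; ring)
    have h2 : HasDerivAt (fun y : ℝ => Real.exp (y ^ 2 / 2 - y))
        (Real.exp (x ^ 2 / 2 - x) * (x - 1)) x := by
      have hinner : HasDerivAt (fun y : ℝ => y ^ 2 / 2 - y) (x - 1) x := by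
        have := ((hasDerivAt_pow 2 x).div_const 2).sub (hasDerivAt_id x)
        exact this.congr_deriv (by push_cast; ring)
      exact hinner.exp
    have := h1.mul h2
    exact this.congr_deriv (by ring)
  have hcont : Continuous F := by
    have : Differentiable ℝ F := fun x => (hder x).differentiableAt
    exact this.continuous
  have hF1 : ∀ x : ℝ, 1 ≤ F x := by
    intro x
    have hF0 : F 0 = 1 := by simp [hF]
    rcases le_or_gt 0 x with hx | hx
    · have hmono : MonotoneOn F (Set.Ici (0:ℝ)) := by
        apply monotoneOn_of_deriv_nonneg (convex_Ici 0) hcont.continuousOn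
        · intro y _
          exact (hder y).differentiableAt.differentiableWithinAt
        · intro y hy
          rw [interior_Ici] at hy
          rw [(hder y).deriv]
          have h2 : (0:ℝ) ≤ 2 + y + y ^ 2 := by nlinarith [sq_nonneg (y + 1)]
          have hy0 : (0:ℝ) ≤ y := le_of_lt hy
          exact mul_nonneg (mul_nonneg (by linarith) h2) (Real.exp_pos _).le
      calc (1:ℝ) = F 0 := hF0.symm
        _ ≤ F x := hmono (Set.self_mem_Ici) hx hx
    · have hanti : AntitoneOn F (Set.Iic (0:ℝ)) := by
        apply antitoneOn_of_deriv_nonpos (convex_Iic 0) hcont.continuousOn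
        · intro y _
          exact (hder y).differentiableAt.differentiableWithinAt
        · intro y hy
          rw [interior_Iic] at hy
          rw [(hder y).deriv]
          have h2 : (0:ℝ) ≤ 2 + y + y ^ 2 := by nlinarith [sq_nonneg (y + 1)]
          have h3 : y / 2 * (2 + y + y ^ 2) ≤ 0 :=
            mul_nonpos_of_nonpos_of_nonneg (by linarith [hy.out]) h2
          exact mul_nonpos_of_nonpos_of_nonneg h3 (Real.exp_pos _).le
      calc (1:ℝ) = F 0 := hF0.symm
        _ ≤ F x := hanti hx.le Set.self_mem_Iic hx.le
  have hx := hF1 u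
  have hexp : Real.exp (u - u ^ 2 / 2) = 1 / Real.exp (u ^ 2 / 2 - u) := by
    rw [eq_div_iff (Real.exp_pos _).ne', ← Real.exp_add]
    norm_num
  rw [hexp, div_le_iff₀ (Real.exp_pos _)]
  simpa [hF] using hx

lemma freedman_aux_exp_half (u : ℝ) : Real.exp (u - u ^ 2 / 2) ≤ Real.exp (1 / 2) := by
  apply Real.exp_le_exp.2
  nlinarith [sq_nonneg (u - 1)]

theorem martingale_freedman_bound {Ω : Type*} {m0 : MeasurableSpace Ω}
    (μ : Measure Ω) [IsProbabilityMeasure μ] (𝒢 : Filtration ℕ m0)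
    (n : ℕ) (N : ℕ → Ω → ℝ) (hN : Martingale N 𝒢 μ) (hN0 : N 0 = 0)
    (hL2 : ∀ i, MemLp (N i) 2 μ)
    (W : ℕ → Ω → ℝ)
    (hW : ∀ i ω, W i ω = ∑ j ∈ Finset.Icc 1 i,
      ((μ[fun ω' => (N j ω' - N (j - 1) ω') ^ 2 | 𝒢 (j - 1)]) ω
        + (N j ω - N (j - 1) ω) ^ 2))
    (ξ t : ℝ) (hξ : 0 < ξ) (ht : 0 ≤ t) :
    μ {ω | ∃ i, 1 ≤ i ∧ i ≤ n ∧ N i ω > ξ / 2 * W i ω + t / ξ}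
      ≤ ENNReal.ofReal (Real.exp (-t)) := by
  classical
  -- the conditional variance increments
  set V : ℕ → Ω → ℝ := fun i => μ[fun ω' => (N (i + 1) ω' - N i ω') ^ 2|𝒢 i] with hV
  -- the exponential supermartingale
  set U : ℕ → Ω → ℝ := fun i ω => Real.exp (ξ * N i ω - ξ ^ 2 / 2 * W i ω) with hU
  have hUpos : ∀ i ω, 0 < U i ω := fun i ω => Real.exp_pos _
  -- step formula for W
  have hWsucc : ∀ i ω, W (i + 1) ω = W i ω + (V i ω + (N (i + 1) ω - N i ω) ^ 2) := by
    intro i ω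
    rw [hW, hW, Finset.sum_Icc_succ_top (Nat.le_add_left 1 i)]
    simp [hV]
  -- W 0 = 0, U 0 = 1
  have hU01 : ∀ ω, U 0 ω = 1 := by
    intro ω
    have hW0 : W 0 ω = 0 := by rw [hW]; simp
    simp [hU, hW0, hN0]
  -- strong measurability of W i w.r.t. 𝒢 i
  have hWm : ∀ i, StronglyMeasurable[𝒢 i] (W i) := by
    intro i
    have hfun : W i = fun ω => ∑ j ∈ Finset.Icc 1 i,
        ((μ[fun ω' => (N j ω' - N (j - 1) ω') ^ 2|𝒢 (j - 1)]) ω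
          + (N j ω - N (j - 1) ω) ^ 2) := funext (hW i)
    rw [hfun]
    refine Finset.stronglyMeasurable_fun_sum _ fun j hj => ?_
    have hj2 : j ≤ i := (Finset.mem_Icc.1 hj).2
    have hj1 : j - 1 ≤ i := le_trans (Nat.sub_le _ _) hj2
    refine StronglyMeasurable.add ?_ ?_
    · exact stronglyMeasurable_condExp.mono (𝒢.mono hj1)
    · exact (((hN.stronglyAdapted j).mono (𝒢.mono hj2)).sub
        ((hN.stronglyAdapted (j - 1)).mono (𝒢.mono hj1))).pow 2
  -- U is adapted
  have hUadp : StronglyAdapted 𝒢 U := by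
    intro i
    exact Real.continuous_exp.comp_stronglyMeasurable
      (((hN.stronglyAdapted i).const_mul ξ).sub ((hWm i).const_mul (ξ ^ 2 / 2)))
  -- integrability facts
  have hΔint : ∀ i, Integrable (fun ω => N (i + 1) ω - N i ω) μ :=
    fun i => (hN.integrable (i + 1)).sub (hN.integrable i)
  have hΔsqint : ∀ i, Integrable (fun ω => (N (i + 1) ω - N i ω) ^ 2) μ :=
    fun i => ((hL2 (i + 1)).sub (hL2 i)).integrable_sq
  have hVnn : ∀ i, (0 : Ω → ℝ) ≤ᵐ[μ] V i :=
    fun i => condExp_nonneg (Filter.Eventually.of_forall fun ω => sq_nonneg _)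
  -- the multiplicative decomposition of U (i+1)
  have hUfact : ∀ i, U (i + 1) = (fun ω => U i ω * Real.exp (-(ξ ^ 2 / 2) * V i ω)) *
      (fun ω => Real.exp (ξ * (N (i + 1) ω - N i ω)
        - ξ ^ 2 / 2 * (N (i + 1) ω - N i ω) ^ 2)) := by
    intro i
    funext ω
    simp only [hU, Pi.mul_apply, ← Real.exp_add]
    congr 1
    rw [hWsucc i ω]
    ring
  -- the second factor is pointwise bounded
  have hgbd : ∀ i ω, Real.exp (ξ * (N (i + 1) ω - N i ω)
      - ξ ^ 2 / 2 * (N (i + 1) ω - N i ω) ^ 2) ≤ Real.exp (1 / 2) := by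
    intro i ω
    have h := freedman_aux_exp_half (ξ * (N (i + 1) ω - N i ω))
    have heq : ξ * (N (i + 1) ω - N i ω) - ξ ^ 2 / 2 * (N (i + 1) ω - N i ω) ^ 2
        = ξ * (N (i + 1) ω - N i ω) - (ξ * (N (i + 1) ω - N i ω)) ^ 2 / 2 := by ring
    rw [heq]
    exact h
  have hgint : ∀ i, Integrable (fun ω => Real.exp (ξ * (N (i + 1) ω - N i ω)
      - ξ ^ 2 / 2 * (N (i + 1) ω - N i ω) ^ 2)) μ := by
    intro i
    have hm : AEStronglyMeasurable (fun ω => Real.exp (ξ * (N (i + 1) ω - N i ω)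
        - ξ ^ 2 / 2 * (N (i + 1) ω - N i ω) ^ 2)) μ := by
      refine (Real.continuous_exp.comp_stronglyMeasurable ?_).aestronglyMeasurable
      have h1 : StronglyMeasurable (N (i + 1)) := (hN.stronglyAdapted (i + 1)).mono (𝒢.le _)
      have h2 : StronglyMeasurable (N i) := (hN.stronglyAdapted i).mono (𝒢.le _)
      exact ((h1.sub h2).const_mul ξ).sub (((h1.sub h2).pow 2).const_mul (ξ ^ 2 / 2))
    refine Integrable.mono' (integrable_const (Real.exp (1 / 2))) hm ?_
    refine Filter.Eventually.of_forall fun ω => ?_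
    rw [Real.norm_eq_abs, abs_of_pos (Real.exp_pos _)]
    exact hgbd i ω
  -- a.e. bound on U i
  have hUble : ∀ i, ∀ᵐ ω ∂μ, U i ω ≤ Real.exp ((i : ℝ) * (1 / 2)) := by
    intro i
    induction i with
    | zero =>
      refine Filter.Eventually.of_forall fun ω => ?_
      rw [hU01 ω]
      simp
    | succ i ih =>
      filter_upwards [ih, hVnn i] with ω h1 h2
      have hfact := congrFun (hUfact i) ω
      simp only [Pi.mul_apply] at hfact
      rw [hfact]
      have hb1 : Real.exp (-(ξ ^ 2 / 2) * V i ω) ≤ 1 := by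
        rw [← Real.exp_zero]
        apply Real.exp_le_exp.2
        have : (0:ℝ) ≤ V i ω := h2
        nlinarith [sq_nonneg ξ]
      have hb2 := hgbd i ω
      have hUviapos := (hUpos i ω).le
      calc U i ω * Real.exp (-(ξ ^ 2 / 2) * V i ω) * Real.exp (ξ * (N (i + 1) ω - N i ω)
            - ξ ^ 2 / 2 * (N (i + 1) ω - N i ω) ^ 2)
          ≤ U i ω * 1 * Real.exp (1 / 2) :=
            mul_le_mul (mul_le_mul_of_nonneg_left hb1 hUviapos) hb2
              (Real.exp_pos _).le (by nlinarith)
        _ = U i ω * Real.exp (1 / 2) := by ring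
        _ ≤ Real.exp ((i : ℝ) * (1 / 2)) * Real.exp (1 / 2) :=
            mul_le_mul_of_nonneg_right h1 (Real.exp_pos _).le
        _ = Real.exp (((i : ℕ) + 1 : ℝ) * (1 / 2)) := by
            rw [← Real.exp_add]; ring_nf
        _ = Real.exp (((i + 1 : ℕ) : ℝ) * (1 / 2)) := by push_cast; ring_nf
  have hUint : ∀ i, Integrable (U i) μ := by
    intro i
    refine Integrable.mono' (integrable_const (Real.exp ((i : ℝ) * (1 / 2))))
      ((hUadp i).mono (𝒢.le i)).aestronglyMeasurable ?_
    filter_upwards [hUble i] with ω hω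
    rwa [Real.norm_eq_abs, abs_of_pos (hUpos i ω)]
  -- the supermartingale property
  have hstep : ∀ i, μ[U (i + 1)|𝒢 i] ≤ᵐ[μ] U i := by
    intro i
    have hfm : StronglyMeasurable[𝒢 i] (fun ω => U i ω * Real.exp (-(ξ ^ 2 / 2) * V i ω)) := by
      refine (hUadp i).mul ?_
      exact Real.continuous_exp.comp_stronglyMeasurable
        (stronglyMeasurable_condExp.const_mul _)
    have hpull := condExp_mul_of_stronglyMeasurable_left (μ := μ) hfm
      ((hUfact i) ▸ hUint (i + 1)) (hgint i)
    -- bound the conditional expectation of g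
    have hle : (fun ω => Real.exp (ξ * (N (i + 1) ω - N i ω)
        - ξ ^ 2 / 2 * (N (i + 1) ω - N i ω) ^ 2)) ≤ᵐ[μ]
        (fun _ => (1:ℝ)) + (ξ • (fun ω => N (i + 1) ω - N i ω)
          + (ξ ^ 2 / 2) • fun ω => (N (i + 1) ω - N i ω) ^ 2) := by
      refine Filter.Eventually.of_forall fun ω => ?_
      simp only [Pi.add_apply, Pi.smul_apply, smul_eq_mul]
      have h := freedman_aux_exp_le (ξ * (N (i + 1) ω - N i ω))
      have heq : ξ * (N (i + 1) ω - N i ω) - ξ ^ 2 / 2 * (N (i + 1) ω - N i ω) ^ 2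
          = ξ * (N (i + 1) ω - N i ω) - (ξ * (N (i + 1) ω - N i ω)) ^ 2 / 2 := by ring
      have heq2 : (ξ * (N (i + 1) ω - N i ω)) ^ 2 / 2
          = ξ ^ 2 / 2 * (N (i + 1) ω - N i ω) ^ 2 := by ring
      rw [heq]
      linarith [h, heq2]
    have hrhsint : Integrable ((fun _ => (1:ℝ)) + (ξ • (fun ω => N (i + 1) ω - N i ω)
        + (ξ ^ 2 / 2) • fun ω => (N (i + 1) ω - N i ω) ^ 2)) μ :=
      (integrable_const 1).add (((hΔint i).smul ξ).add ((hΔsqint i).smul (ξ ^ 2 / 2)))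
    have hmono := condExp_mono (m := 𝒢 i) (hgint i) hrhsint hle
    -- compute the conditional expectation of the RHS
    have e1 := condExp_add (m := 𝒢 i) (μ := μ) (integrable_const (1:ℝ))
      (((hΔint i).smul ξ).add ((hΔsqint i).smul (ξ ^ 2 / 2)))
    have e2 := condExp_add (m := 𝒢 i) (μ := μ) ((hΔint i).smul ξ) ((hΔsqint i).smul (ξ ^ 2 / 2))
    have e3 := condExp_smul (m := 𝒢 i) (μ := μ) ξ (fun ω => N (i + 1) ω - N i ω)
    have e4 := condExp_smul (m := 𝒢 i) (μ := μ) (ξ ^ 2 / 2) (fun ω => (N (i + 1) ω - N i ω) ^ 2)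
    have e5 : μ[fun ω => N (i + 1) ω - N i ω|𝒢 i] =ᵐ[μ] 0 := by
      have hsub := condExp_sub (m := 𝒢 i) (μ := μ) (hN.integrable (i + 1)) (hN.integrable i)
      have hmart := hN.condExp_ae_eq (Nat.le_succ i)
      have hNi : μ[N i|𝒢 i] = N i :=
        condExp_of_stronglyMeasurable (𝒢.le i) (hN.stronglyAdapted i) (hN.integrable i)
      filter_upwards [hsub, hmart] with ω hω1 hω2
      have : (fun ω => N (i + 1) ω - N i ω) = N (i + 1) - N i := rfl
      rw [this, hω1]
      simp [hNi, hω2]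
    have hcondconst : μ[fun _ => (1:ℝ)|𝒢 i] = fun _ => (1:ℝ) := condExp_const (𝒢.le i) 1
    have hcond : μ[(fun _ => (1:ℝ)) + (ξ • (fun ω => N (i + 1) ω - N i ω)
        + (ξ ^ 2 / 2) • fun ω => (N (i + 1) ω - N i ω) ^ 2)|𝒢 i] =ᵐ[μ]
        fun ω => 1 + ξ ^ 2 / 2 * V i ω := by
      filter_upwards [e1, e2, e3, e4, e5] with ω h1 h2 h3 h4 h5
      rw [h1]
      simp only [Pi.add_apply, hcondconst, h2, h3, h4, Pi.smul_apply, smul_eq_mul, h5]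
      simp [hV]
    -- put everything together
    filter_upwards [hpull, hmono, hcond, hVnn i] with ω h1 h2 h3 h4
    simp only [Pi.mul_apply] at h1
    rw [hUfact i, h1]
    have hf_nn : 0 ≤ U i ω * Real.exp (-(ξ ^ 2 / 2) * V i ω) :=
      mul_nonneg (hUpos i ω).le (Real.exp_pos _).le
    have hgle : (μ[fun ω => Real.exp (ξ * (N (i + 1) ω - N i ω)
        - ξ ^ 2 / 2 * (N (i + 1) ω - N i ω) ^ 2)|𝒢 i]) ω ≤ 1 + ξ ^ 2 / 2 * V i ω := by
      rw [← h3]; exact h2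
    calc U i ω * Real.exp (-(ξ ^ 2 / 2) * V i ω) *
          (μ[fun ω => Real.exp (ξ * (N (i + 1) ω - N i ω)
            - ξ ^ 2 / 2 * (N (i + 1) ω - N i ω) ^ 2)|𝒢 i]) ω
        ≤ U i ω * Real.exp (-(ξ ^ 2 / 2) * V i ω) * (1 + ξ ^ 2 / 2 * V i ω) :=
          mul_le_mul_of_nonneg_left hgle hf_nn
      _ ≤ U i ω := by
          set x := ξ ^ 2 / 2 * V i ω with hx
          have hx1 : 1 + x ≤ Real.exp x := by
            have := Real.add_one_le_exp x
            linarith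
          have hexp : Real.exp (-x) * Real.exp x = 1 := by
            rw [← Real.exp_add]; simp
          have hkey : Real.exp (-x) * (1 + x) ≤ 1 := by
            calc Real.exp (-x) * (1 + x) ≤ Real.exp (-x) * Real.exp x :=
                  mul_le_mul_of_nonneg_left hx1 (Real.exp_pos _).le
              _ = 1 := hexp
          have hxeq : -(ξ ^ 2 / 2) * V i ω = -x := by rw [hx]; ring
          rw [hxeq]
          calc U i ω * Real.exp (-x) * (1 + x) = U i ω * (Real.exp (-x) * (1 + x)) := by ring
            _ ≤ U i ω * 1 := mul_le_mul_of_nonneg_left hkey (hUpos i ω).le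
            _ = U i ω := mul_one _
  have hsuper : Supermartingale U 𝒢 μ := supermartingale_nat hUadp hUint hstep
  -- the stopping time
  set c := Real.exp t with hc
  set τ : Ω → WithTop ℕ := fun ω => ((hittingBtwn U (Set.Ici c) 0 n ω : ℕ) : WithTop ℕ) with hτdef
  have hτ : IsStoppingTime 𝒢 τ := hUadp.adapted.isStoppingTime_hittingBtwn measurableSet_Ici
  have hτle : ∀ ω, τ ω ≤ n := fun ω => WithTop.coe_le_coe.2 (hittingBtwn_le ω)
  -- event inclusion
  have hsub : {ω | ∃ i, 1 ≤ i ∧ i ≤ n ∧ N i ω > ξ / 2 * W i ω + t / ξ} ⊆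
      {ω | c ≤ stoppedValue U τ ω} := by
    rintro ω ⟨i, h1, h2, h3⟩
    have hUi : c ≤ U i ω := by
      have h5 : ξ * (t / ξ) = t := mul_div_cancel₀ t hξ.ne'
      have h6 := mul_lt_mul_of_pos_left h3 hξ
      have h7 : t ≤ ξ * N i ω - ξ ^ 2 / 2 * W i ω := by nlinarith
      exact Real.exp_le_exp.2 h7
    exact stoppedValue_hittingBtwn_mem ⟨i, ⟨Nat.zero_le i, h2⟩, hUi⟩
  -- optional stopping
  have hsvint : Integrable (stoppedValue U τ) μ := integrable_stoppedValue ℕ hτ hUint hτle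
  have hOS : ∫ ω, stoppedValue U τ ω ∂μ ≤ 1 := by
    have hmono := (hsuper.neg.expected_stoppedValue_mono (isStoppingTime_const 𝒢 0) hτ
      (fun ω => WithTop.coe_le_coe.2 (Nat.zero_le _)) hτle)
    rw [stoppedValue_const] at hmono
    have hneg1 : stoppedValue (-U) τ = -(stoppedValue U τ) := rfl
    have hneg2 : (-U) 0 = -(U 0) := rfl
    rw [hneg1, hneg2] at hmono
    simp only [Pi.neg_apply] at hmono
    rw [integral_neg, integral_neg] at hmono
    have hint0 : ∫ ω, U 0 ω ∂μ = 1 := by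
      have : U 0 = fun _ => (1:ℝ) := funext hU01
      rw [this]
      simp
    have := neg_le_neg_iff.1 hmono
    linarith [hint0 ▸ this]
  -- Markov inequality
  have hmark := mul_meas_ge_le_integral_of_nonneg
    (Filter.Eventually.of_forall fun ω => (hUpos _ ω).le : 0 ≤ᵐ[μ] stoppedValue U τ)
    hsvint c
  have hcpos : 0 < c := Real.exp_pos t
  have htr : (μ {x | c ≤ stoppedValue U τ x}).toReal ≤ Real.exp (-t) := by
    rw [Real.exp_neg]
    rw [inv_eq_one_div]
    rw [le_div_iff₀ hcpos]
    calc (μ {x | c ≤ stoppedValue U τ x}).toReal * Real.exp t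
        = c * (μ {x | c ≤ stoppedValue U τ x}).toReal := by rw [hc]; ring
      _ ≤ ∫ ω, stoppedValue U τ ω ∂μ := hmark
      _ ≤ 1 := hOS
  have hfin : μ {ω | ∃ i, 1 ≤ i ∧ i ≤ n ∧ N i ω > ξ / 2 * W i ω + t / ξ} ≠ ⊤ :=
    measure_ne_top μ _
  calc μ {ω | ∃ i, 1 ≤ i ∧ i ≤ n ∧ N i ω > ξ / 2 * W i ω + t / ξ}
      = ENNReal.ofReal (μ {ω | ∃ i, 1 ≤ i ∧ i ≤ n ∧
          N i ω > ξ / 2 * W i ω + t / ξ}).toReal := (ENNReal.ofReal_toReal hfin).symm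
    _ ≤ ENNReal.ofReal (Real.exp (-t)) := by
        apply ENNReal.ofReal_le_ofReal
        refine le_trans ?_ htr
        exact ENNReal.toReal_mono (measure_ne_top μ _) (measure_mono hsub)
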